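/- For every ℓ ≥ 1 and k ≥ 2, the number N(k,ℓ) of admissible strings of length ℓ and information cost k equals 4·C(ℓ-1, k-ℓ-1)·2^(k-ℓ-1), with the convention that this is 0 when k-ℓ-1 ∉ {0,…,ℓ-1}. -/

import Mathlib

inductive Symb | A | B | C | D
deriving DecidableEq

def allowed : Symb → Symb → Prop
  | Symb.A, y => y = Symb.A ∨ y = Symb.C
  | Symb.B, y => y = Symb.B ∨ y = Symb.D
  | Symb.C, _ => True
  | Symb.D, _ => True

def isCD : Symb → Bool
  | Symb.C => true
  | Symb.D => true
  | _ => false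

def Admissible (xs : List Symb) : Prop := xs ≠ [] ∧ xs.Chain' allowed

def Mcount (xs : List Symb) : ℕ := xs.dropLast.countP isCD

/-- information cost K(x_1^n) = (n+1) + M(x_1^n) -/
def K (xs : List Symb) : ℕ := xs.length + 1 + Mcount xs

instance : DecidableRel allowed := fun x y => by
  cases x <;> simp only [allowed] <;> infer_instance

instance : Inhabited Symb := ⟨Symb.A⟩

instance : Fintype Symb :=
  ⟨{Symb.A, Symb.B, Symb.C, Symb.D}, by intro x; cases x <;> simp⟩

instance (R : Symb → Symb → Prop) [DecidableRel R] (l : List Symb) : Decidable (List.Chain' R l) :=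
  inferInstanceAs (Decidable (l.IsChain R))

def strs : ℕ → Finset (List Symb)
  | 0 => {[]}
  | n+1 => (Finset.univ : Finset Symb).biUnion (fun a => (strs n).image (a :: ·))

lemma mem_strs (n : ℕ) (xs : List Symb) : xs ∈ strs n ↔ xs.length = n := by
  induction n generalizing xs with
  | zero => simp [strs, List.length_eq_zero_iff]
  | succ n ih =>
    simp only [strs, Finset.mem_biUnion, Finset.mem_univ, true_and, Finset.mem_image]
    constructor
    · rintro ⟨a, ys, hy, rfl⟩; simp [ih ys |>.1 hy]
    · intro h
      cases xs with
      | nil => simp at h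
      | cons a ys => exact ⟨a, ys, (ih ys).2 (by simpa using h), rfl⟩

def S (l m : ℕ) : Finset (List Symb) :=
  (strs l).filter (fun xs => xs.Chain' allowed ∧ Mcount xs = m)

def T (a : Symb) (l m : ℕ) : Finset (List Symb) :=
  (S l m).filter (fun ys => allowed a ys.headI)

lemma mem_S (l m : ℕ) (xs : List Symb) :
    xs ∈ S l m ↔ xs.length = l ∧ xs.Chain' allowed ∧ Mcount xs = m := by
  simp [S, mem_strs]

lemma Mcount_cons (a : Symb) (ys : List Symb) (hy : ys ≠ []) :
    Mcount (a :: ys) = Mcount ys + (if isCD a then 1 else 0) := by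
  unfold Mcount
  rw [List.dropLast_cons_of_ne_nil hy, List.countP_cons]

lemma chain'_cons_iff (a : Symb) (ys : List Symb) (hy : ys ≠ []) :
    (a :: ys).Chain' allowed ↔ allowed a ys.headI ∧ ys.Chain' allowed := by
  simp only [List.Chain']
  rw [List.isChain_cons]
  cases ys with
  | nil => simp at hy
  | cons b t => simp [List.headI]

lemma mem_S_succ (l m : ℕ) (hl : 1 ≤ l) (xs : List Symb) :
    xs ∈ S (l+1) m ↔ ∃ a ys, xs = a :: ys ∧ ys ∈ S l (m - (if isCD a then 1 else 0)) ∧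
      allowed a ys.headI ∧ (if isCD a then 1 else 0) ≤ m := by
  constructor
  · intro h
    rw [mem_S] at h
    obtain ⟨hlen, hch, hm⟩ := h
    cases xs with
    | nil => simp at hlen
    | cons a ys =>
      have hy : ys ≠ [] := by
        intro h; subst h; simp at hlen; omega
      rw [chain'_cons_iff a ys hy] at hch
      rw [Mcount_cons a ys hy] at hm
      refine ⟨a, ys, rfl, ?_, hch.1, by omega⟩
      rw [mem_S]
      refine ⟨by simpa using hlen, hch.2, by omega⟩
  · rintro ⟨a, ys, rfl, hmem, hall, hle⟩
    rw [mem_S] at hmem ⊢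
    obtain ⟨hlen, hch, hm⟩ := hmem
    have hy : ys ≠ [] := by intro h; subst h; simp at hlen; omega
    rw [chain'_cons_iff a ys hy, Mcount_cons a ys hy]
    refine ⟨by simp [hlen], ⟨hall, hch⟩, by omega⟩

lemma S_succ_succ (l m : ℕ) (hl : 1 ≤ l) :
    S (l+1) (m+1) = ((T Symb.A l (m+1)).image (Symb.A :: ·) ∪
      (T Symb.B l (m+1)).image (Symb.B :: ·)) ∪
      ((T Symb.C l m).image (Symb.C :: ·) ∪
      (T Symb.D l m).image (Symb.D :: ·)) := by
  ext xs
  rw [mem_S_succ l (m+1) hl]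
  simp only [Finset.mem_union, Finset.mem_image, T, Finset.mem_filter]
  constructor
  · rintro ⟨a, ys, rfl, hmem, hall, hle⟩
    cases a <;> simp [isCD] at hmem ⊢ <;> tauto
  · rintro ((⟨ys, ⟨h1, h2⟩, rfl⟩ | ⟨ys, ⟨h1, h2⟩, rfl⟩) | (⟨ys, ⟨h1, h2⟩, rfl⟩ | ⟨ys, ⟨h1, h2⟩, rfl⟩))
    · exact ⟨_, ys, rfl, by simpa [isCD] using h1, h2, by simp [isCD]⟩
    · exact ⟨_, ys, rfl, by simpa [isCD] using h1, h2, by simp [isCD]⟩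
    · exact ⟨_, ys, rfl, by simpa [isCD] using h1, h2, by simp [isCD]⟩
    · exact ⟨_, ys, rfl, by simpa [isCD] using h1, h2, by simp [isCD]⟩

lemma S_succ_zero (l : ℕ) (hl : 1 ≤ l) :
    S (l+1) 0 = (T Symb.A l 0).image (Symb.A :: ·) ∪
      (T Symb.B l 0).image (Symb.B :: ·) := by
  ext xs
  rw [mem_S_succ l 0 hl]
  simp only [Finset.mem_union, Finset.mem_image, T, Finset.mem_filter]
  constructor
  · rintro ⟨a, ys, rfl, hmem, hall, hle⟩
    cases a <;> simp [isCD] at hmem hle ⊢ <;> tauto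
  · rintro (⟨ys, ⟨h1, h2⟩, rfl⟩ | ⟨ys, ⟨h1, h2⟩, rfl⟩)
    · exact ⟨_, ys, rfl, by simpa [isCD] using h1, h2, by simp [isCD]⟩
    · exact ⟨_, ys, rfl, by simpa [isCD] using h1, h2, by simp [isCD]⟩

lemma allowed_B_iff (y : Symb) : allowed Symb.B y ↔ ¬ allowed Symb.A y := by
  cases y <;> simp [allowed]

lemma card_TA_TB (l m : ℕ) :
    (T Symb.A l m).card + (T Symb.B l m).card = (S l m).card := by
  have : T Symb.B l m = (S l m).filter (fun ys => ¬ allowed Symb.A ys.headI) := by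
    unfold T
    apply Finset.filter_congr
    intro ys _
    simp [allowed_B_iff]
  rw [this]
  exact Finset.card_filter_add_card_filter_not _

lemma T_C (l m : ℕ) : T Symb.C l m = S l m := by
  unfold T
  apply Finset.filter_true_of_mem
  intros; simp [allowed]

lemma T_D (l m : ℕ) : T Symb.D l m = S l m := by
  unfold T
  apply Finset.filter_true_of_mem
  intros; simp [allowed]

lemma cons_inj (a : Symb) : Function.Injective (a :: · : List Symb → List Symb) := by
  intro x y h; simpa using h

lemma card_S_one (m : ℕ) : (S 1 m).card = if m = 0 then 4 else 0 := by
  have h : S 1 m = if m = 0 then ({[Symb.A], [Symb.B], [Symb.C], [Symb.D]} : Finset (List Symb)) else ∅ := by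
    ext xs
    rw [mem_S]
    constructor
    · rintro ⟨hlen, hch, hm⟩
      match xs, hlen with
      | [a], _ =>
        have : Mcount [a] = 0 := by simp [Mcount]
        rw [this] at hm
        subst hm
        cases a <;> simp
    · intro h
      split at h
      · subst ‹m = 0›
        simp at h
        rcases h with rfl | rfl | rfl | rfl <;> exact ⟨rfl, by simp [List.Chain'], by simp [Mcount]⟩
      · simp at h
  rw [h]
  split <;> simp

lemma card_S (l : ℕ) (hl : 1 ≤ l) (m : ℕ) :
    (S l m).card = 4 * Nat.choose (l - 1) m * 2 ^ m := by
  induction l generalizing m with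
  | zero => omega
  | succ n ih =>
    rcases Nat.eq_or_lt_of_le hl with h1 | h1
    · -- n + 1 = 1, so n = 0
      have hn : n = 0 := by omega
      subst hn
      rw [card_S_one]
      cases m with
      | zero => simp
      | succ m => simp [Nat.choose_eq_zero_of_lt (by omega : (0:ℕ) < m + 1)]
    · have hn : 1 ≤ n := by omega
      have key := ih hn
      cases m with
      | zero =>
        rw [S_succ_zero n hn]
        rw [Finset.card_union_of_disjoint (by
          simp only [Finset.disjoint_left, Finset.mem_image]
          rintro xs ⟨ys, _, rfl⟩ ⟨zs, _, h⟩
          simp at h)]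
        rw [Finset.card_image_of_injective _ (cons_inj _),
            Finset.card_image_of_injective _ (cons_inj _)]
        rw [card_TA_TB, key 0]
        simp
      | succ m =>
        rw [S_succ_succ n m hn]
        rw [Finset.card_union_of_disjoint (by
          simp only [Finset.disjoint_left, Finset.mem_union, Finset.mem_image]
          rintro xs (⟨ys, _, rfl⟩ | ⟨ys, _, rfl⟩) (⟨zs, _, h⟩ | ⟨zs, _, h⟩) <;> simp at h)]
        rw [Finset.card_union_of_disjoint (by
          simp only [Finset.disjoint_left, Finset.mem_image]
          rintro xs ⟨ys, _, rfl⟩ ⟨zs, _, h⟩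
          simp at h)]
        rw [Finset.card_union_of_disjoint (by
          simp only [Finset.disjoint_left, Finset.mem_image]
          rintro xs ⟨ys, _, rfl⟩ ⟨zs, _, h⟩
          simp at h)]
        simp only [Finset.card_image_of_injective _ (cons_inj _)]
        rw [T_C, T_D, card_TA_TB, key (m+1), key m]
        have hchoose : Nat.choose (n + 1 - 1) (m + 1) = Nat.choose (n - 1) (m + 1) + Nat.choose (n-1) m := by
          obtain ⟨p, rfl⟩ : ∃ p, n = p + 1 := ⟨n - 1, by omega⟩
          simp [Nat.choose_succ_succ, Nat.add_comm]
        rw [hchoose]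
        ring

theorem stmt5 (l : ℕ) (hl : 1 ≤ l) (k : ℕ) (hk : 2 ≤ k) :
    Nat.card {xs : List Symb // xs.length = l ∧ Admissible xs ∧ K xs = k}
      = if l + 1 ≤ k then 4 * Nat.choose (l - 1) (k - l - 1) * 2 ^ (k - l - 1) else 0 := by
  by_cases hlk : l + 1 ≤ k
  · rw [if_pos hlk]
    set m := k - l - 1 with hm
    have hiff : ∀ xs : List Symb,
        (xs.length = l ∧ Admissible xs ∧ K xs = k) ↔ xs ∈ S l m := by
      intro xs
      rw [mem_S]
      constructor
      · rintro ⟨hlen, ⟨hne, hch⟩, hK⟩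
        refine ⟨hlen, hch, ?_⟩
        unfold K at hK
        omega
      · rintro ⟨hlen, hch, hMc⟩
        have hne : xs ≠ [] := by
          intro h; subst h; simp at hlen; omega
        refine ⟨hlen, ⟨hne, hch⟩, ?_⟩
        unfold K
        omega
    rw [Nat.card_congr (Equiv.subtypeEquivRight hiff)]
    rw [Nat.card_eq_fintype_card, Fintype.card_coe]
    exact card_S l hl m
  · rw [if_neg hlk]
    have : IsEmpty {xs : List Symb // xs.length = l ∧ Admissible xs ∧ K xs = k} := by
      constructor
      rintro ⟨xs, hlen, _, hK⟩
      unfold K at hK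
      omega
    exact Nat.card_of_isEmpty
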